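/- arXiv:2501.14463 — 8 statements merged into one kernel-verified Lean document; each statement's English description precedes it below -/
import Mathlib

section
/- Let X be a non-trivial (|X| > 1) strongly irreducible subshift on a group G with strong irreducibility constant K. Then Fix(X) ⊆ K, where Fix(X) = {g ∈ G : g·x = x for all x ∈ X}; in particular Fix(X) is finite. -/
/-- The (left) shift action on configurations: `(shift g x) h = x (g⁻¹ * h)`. -/
def shift {G A : Type*} [Group G] (g : G) (x : G → A) : G → A := fun h => x (g⁻¹ * h)

/-- A subshift: a closed, shift-invariant subset of the full shift `A^G`. -/
def IsSubshift {G A : Type*} [Group G] [TopologicalSpace A] (X : Set (G → A)) : Prop :=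
  IsClosed X ∧ ∀ g : G, ∀ x ∈ X, shift g x ∈ X

/-- `X` is strongly irreducible with constant `K`: whenever `S * K ∩ T = ∅`, any two
patterns of `X` with supports `S` and `T` can be jointly realized in `X`. -/
def StronglyIrreducible {G A : Type*} [Group G] (X : Set (G → A)) (K : Finset G) : Prop :=
  ∀ S T : Finset G, (∀ s ∈ S, ∀ k ∈ K, s * k ∉ T) →
    ∀ x ∈ X, ∀ y ∈ X, ∃ z ∈ X, (∀ g ∈ S, z g = x g) ∧ (∀ g ∈ T, z g = y g)

/-- for a non-trivial strongly irreducible subshift with constant `K`,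
the kernel of the shift action is contained in `K` (in particular it is finite). -/
theorem stmt2 {G A : Type*} [Group G] [Fintype A] [TopologicalSpace A] [DiscreteTopology A]
    (X : Set (G → A)) (hX : IsSubshift X) (hnt : ∃ x ∈ X, ∃ y ∈ X, x ≠ y)
    (K : Finset G) (hSI : StronglyIrreducible X K) :
    ∀ g : G, (∀ x ∈ X, shift g x = x) → g ∈ K := by
  intro g hg
  by_contra hgK
  obtain ⟨x, hx, y, hy, hxy⟩ := hnt
  obtain ⟨h, hh⟩ : ∃ h, x h ≠ y h := by
    by_contra hc; push_neg at hc; exact hxy (funext hc)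
  have hx'X : shift h⁻¹ x ∈ X := hX.2 _ _ hx
  have hy''X : shift (g * h⁻¹) y ∈ X := hX.2 _ _ hy
  obtain ⟨z, hzX, hz1, hzg⟩ := hSI {1} {g} (by
    intro s hs k hk
    simp only [Finset.mem_singleton] at hs ⊢
    subst hs
    rw [one_mul]
    rintro rfl; exact hgK hk) _ hx'X _ hy''X
  have h1 : z 1 = x h := by
    have := hz1 1 (Finset.mem_singleton_self 1)
    simpa [shift] using this
  have h2 : z g = y h := by
    have := hzg g (Finset.mem_singleton_self g)
    rw [this]; simp [shift, mul_assoc]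
  have h3 : z g = z 1 := by
    have hz := hg z hzX
    conv_lhs => rw [← hz]
    simp [shift]
  exact hh (by rw [← h1, ← h2, h3])
end

section
/- Let G be a group whose only finite normal subgroup is trivial (e.g., a torsion-free group). Then the shift action of G on every non-trivial strongly irreducible G-subshift is faithful. -/
lemma shift_mul {G A : Type*} [Group G] (a b : G) (x : G → A) :
    shift (a * b) x = shift a (shift b x) := by
  funext h; simp [shift, mul_assoc]

/-- if the only finite normal subgroup of `G` is trivial, then the shift
action of `G` on every non-trivial strongly irreducible `G`-subshift is faithful. -/
theorem stmt3 {G A : Type*} [Group G] [Fintype A] [TopologicalSpace A] [DiscreteTopology A]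
    (hG : ∀ N : Subgroup G, N.Normal → (N : Set G).Finite → N = ⊥)
    (X : Set (G → A)) (hX : IsSubshift X) (hnt : ∃ x ∈ X, ∃ y ∈ X, x ≠ y)
    (K : Finset G) (hSI : StronglyIrreducible X K) :
    ∀ g : G, (∀ x ∈ X, shift g x = x) → g = 1 := by
  have key : ∀ g : G, (∀ x ∈ X, shift g x = x) → g ∈ K := by
    intro g hg
    by_contra hgK
    have h1 : ∀ s ∈ ({1} : Finset G), ∀ k ∈ K, s * k ∉ ({g} : Finset G) := by
      intro s hs k hk
      simp only [Finset.mem_singleton] at hs ⊢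
      subst hs
      rw [one_mul]
      rintro rfl; exact hgK hk
    have hconst : ∀ x ∈ X, ∀ y ∈ X, x 1 = y g := by
      intro x hx y hy
      obtain ⟨z, hz, hz1, hz2⟩ := hSI {1} {g} h1 x hx y hy
      have hfix := congrFun (hg z hz) g
      have hzz : z 1 = z g := by simpa [shift] using hfix
      rw [← hz1 1 (Finset.mem_singleton_self 1), hzz, hz2 g (Finset.mem_singleton_self g)]
    obtain ⟨x, hx, y, hy, hxy⟩ := hnt
    apply hxy
    funext h
    have hx' : shift h⁻¹ x ∈ X := hX.2 _ _ hx
    have hy' : shift (g * h⁻¹) y ∈ X := hX.2 _ _ hy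
    have := hconst _ hx' _ hy'
    simpa [shift, mul_assoc] using this
  intro g hg
  let N : Subgroup G :=
    { carrier := {g | ∀ x ∈ X, shift g x = x}
      one_mem' := by intro x hx; funext h; simp [shift]
      mul_mem' := by
        intro a b ha hb x hx
        rw [shift_mul, hb x hx, ha x hx]
      inv_mem' := by
        intro a ha x hx
        calc shift a⁻¹ x = shift a⁻¹ (shift a x) := by rw [ha x hx]
          _ = x := by funext h; simp [shift, mul_assoc] }
  have hNnorm : N.Normal := by
    constructor
    intro n hn h x hx
    have hx' : shift h⁻¹ x ∈ X := hX.2 _ _ hx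
    calc shift (h * n * h⁻¹) x = shift h (shift n (shift h⁻¹ x)) := by
          rw [← shift_mul, ← shift_mul]
      _ = shift h (shift h⁻¹ x) := by rw [hn _ hx']
      _ = x := by rw [← shift_mul]; funext k; simp [shift, mul_assoc]
  have hfin : ((N : Set G)).Finite :=
    Set.Finite.subset K.finite_toSet (fun a ha => key a ha)
  have hN : N = ⊥ := hG N hNnorm hfin
  have hgN : g ∈ N := hg
  rw [hN] at hgN
  simpa using hgN
end

section
/- Let G be a group, X a nonempty strongly irreducible G-subshift with strong irreducibility constant K (finite, nonempty). Then for every finite F ⊆ G: |L_F(X)| ≥ |L_{{1}}(X)|^(|F| / (2|K|)). -/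
/-- The number of patterns with support `F` appearing in `X`. -/
noncomputable def langCard {G A : Type*} [Group G] (X : Set (G → A)) (F : Finset G) : ℕ :=
  Set.ncard ((fun x : G → A => fun g : F => x (g : G)) '' X)

/-- Auxiliary: exists a list in `F`, pairwise "K-spread", covering `F` up to factor `|K|+1`. -/
lemma exists_good_list {G : Type*} [Group G] [DecidableEq G] (K : Finset G) :
    ∀ F : Finset G, ∃ l : List G, l.Nodup ∧ (∀ g ∈ l, g ∈ F) ∧
      F.card ≤ l.length * (K.card + 1) ∧
      l.Pairwise (fun a b => ∀ k ∈ K, a * k ≠ b) := by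
  intro F
  induction F using Finset.strongInduction with
  | _ F ih =>
    rcases F.eq_empty_or_nonempty with rfl | ⟨v, hv⟩
    · exact ⟨[], by simp⟩
    · set N : Finset G := insert v (K.image (fun k => v * k)) with hN
      have hsub : F \ N ⊂ F := by
        refine (Finset.ssubset_iff_of_subset (Finset.sdiff_subset)).mpr ⟨v, hv, ?_⟩
        simp [N]
      obtain ⟨l', hnd, hmem, hcard, hpw⟩ := ih _ hsub
      refine ⟨v :: l', ?_, ?_, ?_, ?_⟩
      · refine List.nodup_cons.mpr ⟨fun hvl => ?_, hnd⟩
        have := hmem v hvl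
        simp [N] at this
      · intro g hg
        rcases List.mem_cons.mp hg with rfl | hg
        · exact hv
        · exact (Finset.mem_sdiff.mp (hmem g hg)).1
      · have h1 : F.card ≤ (F \ N).card + N.card := by
          have : F ⊆ (F \ N) ∪ N := by
            intro g hg
            by_cases hgN : g ∈ N
            · exact Finset.mem_union_right _ hgN
            · exact Finset.mem_union_left _ (Finset.mem_sdiff.mpr ⟨hg, hgN⟩)
          calc F.card ≤ ((F \ N) ∪ N).card := Finset.card_le_card this
            _ ≤ (F \ N).card + N.card := Finset.card_union_le _ _
        have h2 : N.card ≤ K.card + 1 := by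
          calc N.card ≤ (K.image (fun k => v * k)).card + 1 := Finset.card_insert_le _ _
            _ ≤ K.card + 1 := by
              exact Nat.add_le_add_right (Finset.card_image_le) 1
        calc F.card ≤ (F \ N).card + N.card := h1
          _ ≤ l'.length * (K.card + 1) + (K.card + 1) := Nat.add_le_add hcard h2
          _ = (v :: l').length * (K.card + 1) := by
            simp [List.length_cons, Nat.succ_mul]
      · refine List.pairwise_cons.mpr ⟨fun b hb k hk hvk => ?_, hpw⟩
        have hbF := hmem b hb
        rw [Finset.mem_sdiff] at hbF
        exact hbF.2 (by
          rw [hN]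
          exact Finset.mem_insert_of_mem (Finset.mem_image.mpr ⟨k, hk, hvk⟩))

/-- Auxiliary: gluing along a good list. -/
lemma glue_list {G A : Type*} [Group G] [DecidableEq G] (X : Set (G → A))
    (hne : X.Nonempty) (K : Finset G) (hSI : StronglyIrreducible X K) :
    ∀ l : List G, l.Pairwise (fun a b => ∀ k ∈ K, a * k ≠ b) →
      ∀ φ : G → A, (∀ g ∈ l, ∃ x ∈ X, x g = φ g) →
      ∃ z ∈ X, ∀ g ∈ l, z g = φ g := by
  intro l
  induction l with
  | nil =>
    exact fun _ φ _ => ⟨hne.choose, hne.choose_spec, by simp⟩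
  | cons v l' ih =>
    intro hpw φ hφ
    rw [List.pairwise_cons] at hpw
    obtain ⟨z', hz'X, hz'⟩ := ih hpw.2 φ (fun g hg => hφ g (List.mem_cons_of_mem _ hg))
    obtain ⟨x, hxX, hxv⟩ := hφ v List.mem_cons_self
    obtain ⟨z, hzX, hz1, hz2⟩ := hSI {v} l'.toFinset
      (by
        intro s hs k hk hmem
        rw [Finset.mem_singleton] at hs
        subst hs
        exact hpw.1 _ (List.mem_toFinset.mp hmem) k hk rfl)
      x hxX z' hz'X
    refine ⟨z, hzX, fun g hg => ?_⟩
    rcases List.mem_cons.mp hg with rfl | hg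
    · rw [hz1 g (Finset.mem_singleton_self g), hxv]
    · rw [hz2 g (List.mem_toFinset.mpr hg), hz' g hg]

/-- for a nonempty strongly irreducible subshift with nonempty constant `K`,
`|L_F(X)| ≥ |L_{1}(X)|^(|F|/(2|K|))`, stated equivalently as
`|L_{1}(X)|^|F| ≤ |L_F(X)|^(2|K|)`. -/
theorem stmt5 {G A : Type*} [Group G] [Fintype A] [TopologicalSpace A] [DiscreteTopology A]
    (X : Set (G → A)) (hX : IsSubshift X) (hne : X.Nonempty)
    (K : Finset G) (hKne : K.Nonempty) (hSI : StronglyIrreducible X K) (F : Finset G) :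
    langCard X {(1 : G)} ^ F.card ≤ langCard X F ^ (2 * K.card) := by
  classical
  obtain ⟨l, hnd, hlF, hlen, hpw⟩ := exists_good_list K F
  set V : Finset A := Finset.univ.filter (fun a => ∃ x ∈ X, x 1 = a) with hV
  set Q : Set ({x // x ∈ ({(1:G)} : Finset G)} → A) :=
    (fun x : G → A => fun g : ({(1:G)} : Finset G) => x (g : G)) '' X with hQdef
  set P : Set ({x // x ∈ F} → A) := (fun x : G → A => fun g : F => x (g : G)) '' X with hPdef
  have hQfin : Q.Finite := Set.toFinite _
  have hPfin : P.Finite := Set.toFinite _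
  have hQcard : langCard X {(1 : G)} = hQfin.toFinset.card := by
    simp only [langCard]
    exact Set.ncard_eq_toFinset_card _ hQfin
  have hPcard : langCard X F = Nat.card P := by
    simp only [langCard]
    exact (Nat.card_coe_set_eq P).symm
  -- Step A : langCard X {1} ≤ V.card
  have stepA : langCard X {(1 : G)} ≤ V.card := by
    rw [hQcard]
    apply Finset.card_le_card_of_injOn (fun q => q ⟨1, Finset.mem_singleton_self 1⟩)
    · intro q hq
      rw [Finset.mem_coe, Set.Finite.mem_toFinset] at hq
      obtain ⟨x, hxX, rfl⟩ := hq
      simp only [hV, Finset.mem_coe, Finset.mem_filter, Finset.mem_univ, true_and]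
      exact ⟨x, hxX, rfl⟩
    · intro q1 _ q2 _ h
      funext g
      have hg : g = ⟨1, Finset.mem_singleton_self 1⟩ := by
        apply Subtype.ext
        have := g.2
        rwa [Finset.mem_singleton] at this
      rw [hg]; exact h
  -- Step B : V.card ^ l.length ≤ langCard X F
  have key : ∀ f : ({x // x ∈ l.toFinset} → V), ∃ z, z ∈ X ∧
      ∀ (g : G) (h : g ∈ l.toFinset), z g = (f ⟨g, h⟩ : A) := by
    intro f
    have hreal : ∀ g ∈ l, ∃ x ∈ X, x g =
        (fun g' => if h : g' ∈ l.toFinset then (f ⟨g', h⟩ : A) else hne.choose g') g := by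
      intro g hg
      have hgt : g ∈ l.toFinset := List.mem_toFinset.mpr hg
      have hval : ∃ x ∈ X, x 1 = (f ⟨g, hgt⟩ : A) := by
        have h := (f ⟨g, hgt⟩).2
        simp only [hV, Finset.mem_filter, Finset.mem_univ, true_and] at h
        exact h
      obtain ⟨x, hxX, hx1⟩ := hval
      refine ⟨shift g x, hX.2 g x hxX, ?_⟩
      simp only [shift, inv_mul_cancel, hx1, dif_pos hgt]
    obtain ⟨z, hzX, hz⟩ := glue_list X hne K hSI l hpw _ hreal
    refine ⟨z, hzX, fun g h => ?_⟩
    have := hz g (List.mem_toFinset.mp h)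
    simpa [h] using this
  choose zf hzfX hzf using key
  have stepB : V.card ^ l.length ≤ langCard X F := by
    have hθ : ∀ f : ({x // x ∈ l.toFinset} → V), (fun g : F => zf f (g : G)) ∈ P :=
      fun f => ⟨zf f, hzfX f, rfl⟩
    set θ : ({x // x ∈ l.toFinset} → V) → P := fun f => ⟨fun g : F => zf f (g : G), hθ f⟩
      with hθdef
    have hinj : Function.Injective θ := by
      intro f1 f2 h
      funext g
      obtain ⟨g, hg⟩ := g
      have hgl : g ∈ l := List.mem_toFinset.mp hg
      have hgF : g ∈ F := hlF g hgl
      have h1 : zf f1 g = zf f2 g := by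
        have h2 := congrArg Subtype.val h
        exact congrFun h2 ⟨g, hgF⟩
      apply Subtype.ext
      rw [← hzf f1 g hg, ← hzf f2 g hg, h1]
    haveI : Finite P := hPfin.to_subtype
    have hcard1 : Nat.card ({x // x ∈ l.toFinset} → V) ≤ Nat.card P :=
      Nat.card_le_card_of_injective θ hinj
    have hcard2 : Nat.card ({x // x ∈ l.toFinset} → V) = V.card ^ l.length := by
      rw [Nat.card_eq_fintype_card, Fintype.card_fun, Fintype.card_coe, Fintype.card_coe,
        List.toFinset_card_of_nodup hnd]
    omega
  -- Step C
  have stepC : 1 ≤ langCard X F := by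
    rw [hPcard]
    haveI : Finite P := hPfin.to_subtype
    have hPne : P.Nonempty := by
      obtain ⟨x, hx⟩ := hne
      exact ⟨_, x, hx, rfl⟩
    have := Nat.card_pos_iff.mpr ⟨Set.nonempty_coe_sort.mpr hPne, inferInstance⟩
    omega
  have hn1 : 1 ≤ langCard X {(1 : G)} := by
    rw [hQcard]
    have hQne : hQfin.toFinset.Nonempty := by
      rw [Set.Finite.toFinset_nonempty]
      obtain ⟨x, hx⟩ := hne
      exact ⟨_, x, hx, rfl⟩
    exact Finset.card_pos.mpr hQne
  have hK1 : 1 ≤ K.card := Finset.Nonempty.card_pos hKne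
  calc langCard X {(1 : G)} ^ F.card
      ≤ langCard X {(1 : G)} ^ (l.length * (K.card + 1)) :=
        Nat.pow_le_pow_right hn1 hlen
    _ = (langCard X {(1 : G)} ^ l.length) ^ (K.card + 1) := pow_mul _ _ _
    _ ≤ (V.card ^ l.length) ^ (K.card + 1) :=
        Nat.pow_le_pow_left (Nat.pow_le_pow_left stepA _) _
    _ ≤ (langCard X F) ^ (K.card + 1) := Nat.pow_le_pow_left stepB _
    _ ≤ (langCard X F) ^ (2 * K.card) := Nat.pow_le_pow_right stepC (by omega)
end

section
/- Let G be a group, X ⊆ A^G a non-trivial strongly irreducible subshift with constant K, and H ≤ G a subgroup containing K. Then for every x ∈ X and every y ∈ X|_H, the configuration obtained by replacing x on H by y (i.e., x|_{G∖H} ∨ y) lies in X. -/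
open scoped Classical

/-- Restriction of a configuration to a subgroup. -/
def restrictH {G A : Type*} [Group G] (H : Subgroup G) (x : G → A) : H → A :=
  fun h => x (h : G)

/-- splicing a configuration of the restriction `X|_H` into a configuration
of `X` over the subgroup `H` stays in `X`. -/
theorem stmt11 {G A : Type*} [Group G] [Fintype A] [TopologicalSpace A] [DiscreteTopology A]
    (X : Set (G → A)) (hX : IsSubshift X) (hnt : ∃ x ∈ X, ∃ y ∈ X, x ≠ y)
    (H : Subgroup G) (KH : Finset H)
    (hSI : StronglyIrreducible X (KH.map ⟨Subtype.val, Subtype.val_injective⟩))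
    (x : G → A) (hx : x ∈ X) (y : H → A) (hy : y ∈ restrictH H '' X) :
    (fun g : G => if hg : g ∈ H then y ⟨g, hg⟩ else x g) ∈ X := by
  obtain ⟨w, hw, hwy⟩ := hy
  set z : G → A := fun g : G => if hg : g ∈ H then y ⟨g, hg⟩ else x g with hz
  have key : ∀ F : Finset G, ∃ v ∈ X, ∀ g ∈ F, v g = z g := by
    intro F
    obtain ⟨v, hv, hvx, hvw⟩ :=
      hSI (F.filter (fun g => g ∉ H)) (F.filter (fun g => g ∈ H))
        (by
          intro s hs k hk
          simp only [Finset.mem_filter] at hs ⊢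
          rintro ⟨-, hskH⟩
          obtain ⟨k', hk', rfl⟩ := Finset.mem_map.mp hk
          exact hs.2 ((H.mul_mem_cancel_right k'.2).mp hskH)) x hx w hw
    refine ⟨v, hv, fun g hg => ?_⟩
    by_cases hgH : g ∈ H
    · have h1 := hvw g (Finset.mem_filter.mpr ⟨hg, hgH⟩)
      have h2 : y ⟨g, hgH⟩ = w g := by rw [← hwy]; rfl
      simp [hz, hgH, h1, h2]
    · have h1 := hvx g (Finset.mem_filter.mpr ⟨hg, hgH⟩)
      simp [hz, hgH, h1]
  have hcl : z ∈ closure X := by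
    rw [mem_closure_iff]
    intro U hU hzU
    obtain ⟨I, u, hu, hsub⟩ := isOpen_pi_iff.mp hU z hzU
    obtain ⟨v, hvX, hv⟩ := key I
    exact ⟨v, hsub (fun i hi => by rw [hv i hi]; exact (hu i hi).2), hvX⟩
  rwa [hX.1.closure_eq] at hcl
end

section
/- Let G be a group, X ⊆ A^G a non-trivial strongly irreducible subshift with constant K, and H ≤ G a subgroup containing K. Then X has the strong topological Markov property if and only if X|_H does. -/
open scoped Classical

/-- The strong topological Markov property: there is a finite memory set `M` such that
configurations of `X` agreeing on `FM ∖ F` can be exchanged on `F`. -/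
def StrongTMP {G A : Type*} [Group G] (X : Set (G → A)) : Prop :=
  ∃ M : Finset G, ∀ F : Finset G, ∀ x ∈ X, ∀ y ∈ X,
    (∀ g : G, (∃ f ∈ F, ∃ m ∈ M, g = f * m) → g ∉ F → x g = y g) →
    (fun g : G => if g ∈ F then x g else y g) ∈ X

section Aux
variable {G A : Type*} [Group G] [TopologicalSpace A] [DiscreteTopology A]

lemma splice_subgroup (X : Set (G → A)) (hX : IsSubshift X) (H : Subgroup G)
    (K : Finset G) (hKH : ∀ k ∈ K, k ∈ H) (hSI : StronglyIrreducible X K)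
    {x y : G → A} (hx : x ∈ X) (hy : y ∈ X) :
    (fun g => if g ∈ H then y g else x g) ∈ X := by
  classical
  rw [← hX.1.closure_eq]
  rw [mem_closure_iff_nhds]
  intro U hU
  rw [nhds_pi, Filter.mem_pi] at hU
  obtain ⟨I, hIfin, t, ht, hsub⟩ := hU
  set W := hIfin.toFinset with hW
  set S := W.filter (fun g => g ∈ H) with hS
  set T := W.filter (fun g => g ∉ H) with hT
  have hdisj : ∀ s ∈ S, ∀ k ∈ K, s * k ∉ T := by
    intro s hs k hk hT'
    have hsH : s ∈ H := (Finset.mem_filter.mp hs).2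
    have : s * k ∈ H := H.mul_mem hsH (hKH k hk)
    exact (Finset.mem_filter.mp hT').2 this
  obtain ⟨z, hz, hzS, hzT⟩ := hSI S T hdisj y hy x hx
  refine ⟨z, hsub ?_, hz⟩
  intro i hi
  have hiW : i ∈ W := hIfin.mem_toFinset.mpr hi
  have hzi : z i = if i ∈ H then y i else x i := by
    by_cases h : i ∈ H
    · simp only [if_pos h]; exact hzS i (Finset.mem_filter.mpr ⟨hiW, h⟩)
    · simp only [if_neg h]; exact hzT i (Finset.mem_filter.mpr ⟨hiW, h⟩)
  rw [hzi]
  exact mem_of_mem_nhds (ht i)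

end Aux

section Aux2
variable {G A : Type*} [Group G] [TopologicalSpace A] [DiscreteTopology A]

lemma splice_main (X : Set (G → A)) (hX : IsSubshift X) (H : Subgroup G)
    (K : Finset G) (hKH : ∀ k ∈ K, k ∈ H) (hSI : StronglyIrreducible X K)
    (M' : Finset H)
    (hM' : ∀ F : Finset H, ∀ x ∈ restrictH H '' X, ∀ y ∈ restrictH H '' X,
      (∀ g : H, (∃ f ∈ F, ∃ m ∈ M', g = f * m) → g ∉ F → x g = y g) →
      ∃ w ∈ restrictH H '' X, (∀ g ∈ F, w g = x g) ∧ (∀ g ∉ F, w g = y g)) :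
    ∀ n : ℕ, ∀ F : Finset G, F.card ≤ n → ∀ x ∈ X, ∀ y ∈ X,
      (∀ g : G, (∃ f ∈ F, ∃ m ∈ M'.map ⟨Subtype.val, Subtype.val_injective⟩, g = f * m) →
        g ∉ F → x g = y g) →
      (fun g : G => if g ∈ F then x g else y g) ∈ X := by
  classical
  intro n
  induction n with
  | zero =>
    intro F hF x hx y hy _
    have hFe : F = ∅ := Finset.card_eq_zero.mp (Nat.le_zero.mp hF)
    subst hFe
    simpa using hy
  | succ n ih =>
    intro F hF x hx y hy hagree
    by_cases hFe : F = ∅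
    · subst hFe; simpa using hy
    obtain ⟨g₀, hg₀⟩ := Finset.nonempty_iff_ne_empty.mpr hFe
    set C := F.filter (fun g => g₀⁻¹ * g ∈ H) with hCdef
    set F₂ := F.filter (fun g => g₀⁻¹ * g ∉ H) with hF₂def
    have hg₀C : g₀ ∈ C := by
      simp only [hCdef, Finset.mem_filter]
      exact ⟨hg₀, by simpa using H.one_mem⟩
    have hg₀F₂ : g₀ ∉ F₂ := by
      simp only [hF₂def, Finset.mem_filter, not_and, not_not]
      intro _; simpa using H.one_mem
    have hcard : F₂.card < F.card :=
      Finset.card_lt_card ((Finset.ssubset_iff_of_subset (Finset.filter_subset _ _)).mpr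
        ⟨g₀, hg₀, hg₀F₂⟩)
    -- agreement for F₂
    have hagree₂ : ∀ g : G,
        (∃ f ∈ F₂, ∃ m ∈ M'.map ⟨Subtype.val, Subtype.val_injective⟩, g = f * m) →
        g ∉ F₂ → x g = y g := by
      rintro g ⟨f, hf, m, hm, rfl⟩ hgF₂
      obtain ⟨hfF, hfH⟩ := Finset.mem_filter.mp hf
      obtain ⟨m', _, rfl⟩ := Finset.mem_map.mp hm
      have hmH : (m' : G) ∈ H := m'.2
      have hgnF : f * (m' : G) ∉ F := by
        intro hgF
        by_cases hh : g₀⁻¹ * (f * (m' : G)) ∈ H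
        · have : g₀⁻¹ * f ∈ H := by
            have := H.mul_mem hh (H.inv_mem hmH)
            simpa [mul_assoc] using this
          exact hfH this
        · exact hgF₂ (Finset.mem_filter.mpr ⟨hgF, by simpa using hh⟩)
      exact hagree _ ⟨f, hfF, m', hm, rfl⟩ hgnF
    have hz₀ : (fun g : G => if g ∈ F₂ then x g else y g) ∈ X :=
      ih F₂ (by omega) x hx y hy hagree₂
    set z₀ : G → A := fun g => if g ∈ F₂ then x g else y g with hz₀def
    -- key agreement: x = z₀ on CM' ∖ C
    have hkey : ∀ c ∈ C, ∀ m' ∈ M', c * (m' : G) ∉ C → x (c * (m' : G)) = z₀ (c * (m' : G)) := by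
      intro c hc m' hm' hnc
      obtain ⟨hcF, hcH⟩ := Finset.mem_filter.mp hc
      have hgH : g₀⁻¹ * (c * (m' : G)) ∈ H := by
        have := H.mul_mem hcH m'.2
        simpa [mul_assoc] using this
      have hgnF : c * (m' : G) ∉ F := by
        intro hgF
        exact hnc (Finset.mem_filter.mpr ⟨hgF, hgH⟩)
      have hxy : x (c * (m' : G)) = y (c * (m' : G)) :=
        hagree _ ⟨c, hcF, m', Finset.mem_map.mpr ⟨m', hm', rfl⟩, rfl⟩ hgnF
      have hgnF₂ : c * (m' : G) ∉ F₂ := fun h => hgnF (Finset.filter_subset _ _ h)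
      rw [hxy, hz₀def]
      simp [hgnF₂]
    set F₁ : Finset H := C.attach.image
      (fun c => (⟨g₀⁻¹ * c.1, by
        have hc := c.2
        simp only [hCdef, Finset.mem_filter] at hc
        exact hc.2⟩ : H)) with hF₁def
    have hmemF₁ : ∀ h : H, h ∈ F₁ ↔ g₀ * (h : G) ∈ C := by
      intro h
      constructor
      · intro hh
        obtain ⟨c, -, hc⟩ := Finset.mem_image.mp hh
        have h1 : (g₀⁻¹ * c.1 : G) = ↑h := congrArg Subtype.val hc
        have h2 : (c.1 : G) = g₀ * ↑h := by rw [← h1]; group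
        rw [← h2]; exact c.2
      · intro hh
        refine Finset.mem_image.mpr ⟨⟨g₀ * ↑h, hh⟩, Finset.mem_attach _ _, ?_⟩
        ext
        simp
    have hxs : shift g₀⁻¹ x ∈ X := hX.2 _ x hx
    have hzs : shift g₀⁻¹ z₀ ∈ X := hX.2 _ _ hz₀
    have hagree₁ : ∀ h : H, (∃ f ∈ F₁, ∃ m ∈ M', h = f * m) → h ∉ F₁ →
        restrictH H (shift g₀⁻¹ x) h = restrictH H (shift g₀⁻¹ z₀) h := by
      rintro h ⟨f, hf, m, hm, rfl⟩ hhF₁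
      have hfC : g₀ * (f : G) ∈ C := (hmemF₁ f).mp hf
      have hnc : (g₀ * (f : G)) * (m : G) ∉ C := by
        intro hco
        apply hhF₁
        rw [hmemF₁]
        convert hco using 1
        push_cast
        group
      have := hkey _ hfC m hm hnc
      show (shift g₀⁻¹ x) ((f * m : H) : G) = (shift g₀⁻¹ z₀) ((f * m : H) : G)
      simp only [shift, inv_inv]
      convert this using 2 <;> (push_cast; group)
    obtain ⟨w, ⟨u, hu, hur⟩, hwin, hwout⟩ := hM' F₁ (restrictH H (shift g₀⁻¹ x)) ⟨_, hxs, rfl⟩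
      (restrictH H (shift g₀⁻¹ z₀)) ⟨_, hzs, rfl⟩ hagree₁
    have hv : (fun g => if g ∈ H then u g else (shift g₀⁻¹ z₀) g) ∈ X :=
      splice_subgroup X hX H K hKH hSI hzs hu
    have hfinal : (fun g : G => if g ∈ F then x g else y g)
        = shift g₀ (fun g => if g ∈ H then u g else (shift g₀⁻¹ z₀) g) := by
      funext g
      show _ = if g₀⁻¹ * g ∈ H then u (g₀⁻¹ * g) else (shift g₀⁻¹ z₀) (g₀⁻¹ * g)
      by_cases hgH : g₀⁻¹ * g ∈ H
      · rw [if_pos hgH]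
        have hu' : u (g₀⁻¹ * g) = restrictH H u ⟨g₀⁻¹ * g, hgH⟩ := rfl
        rw [hu', hur]
        by_cases hgC : g ∈ C
        · have hmem : (⟨g₀⁻¹ * g, hgH⟩ : H) ∈ F₁ := by
            rw [hmemF₁]
            simpa [mul_inv_cancel_left] using hgC
          rw [hwin _ hmem, if_pos ((Finset.mem_filter.mp hgC).1)]
          show x g = (shift g₀⁻¹ x) _
          simp [shift, mul_inv_cancel_left]
        · have hmem : (⟨g₀⁻¹ * g, hgH⟩ : H) ∉ F₁ := by
            rw [hmemF₁]
            simpa [mul_inv_cancel_left] using hgC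
          rw [hwout _ hmem]
          have hgnF : g ∉ F := fun hgF => hgC (Finset.mem_filter.mpr ⟨hgF, hgH⟩)
          rw [if_neg hgnF]
          have hgnF₂ : g ∉ F₂ := fun h => hgnF (Finset.filter_subset _ _ h)
          show y g = (shift g₀⁻¹ z₀) _
          simp [shift, mul_inv_cancel_left, hz₀def, hgnF₂]
      · rw [if_neg hgH]
        show _ = (shift g₀⁻¹ z₀) (g₀⁻¹ * g)
        simp only [shift, inv_inv, mul_inv_cancel_left, hz₀def]
        by_cases hgF : g ∈ F
        · rw [if_pos hgF, if_pos (Finset.mem_filter.mpr ⟨hgF, hgH⟩)]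
        · rw [if_neg hgF, if_neg (fun h => hgF (Finset.filter_subset _ _ h))]
    rw [hfinal]
    exact hX.2 g₀ _ hv

end Aux2

/-- a non-trivial strongly irreducible subshift with constant `K ⊆ H` has
the strong topological Markov property iff its restriction `X|_H` does. -/
theorem stmt13 {G A : Type*} [Group G] [Fintype A] [TopologicalSpace A] [DiscreteTopology A]
    (X : Set (G → A)) (hX : IsSubshift X) (hnt : ∃ x ∈ X, ∃ y ∈ X, x ≠ y)
    (H : Subgroup G) (KH : Finset H)
    (hSI : StronglyIrreducible X (KH.map ⟨Subtype.val, Subtype.val_injective⟩)) :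
    StrongTMP X ↔ StrongTMP (restrictH H '' X) := by
  classical
  set K : Finset G := KH.map ⟨Subtype.val, Subtype.val_injective⟩ with hKdef
  have hKH : ∀ k ∈ K, k ∈ H := by
    intro k hk
    obtain ⟨k', -, rfl⟩ := Finset.mem_map.mp hk
    exact k'.2
  constructor
  · rintro ⟨M, hM⟩
    refine ⟨M.preimage Subtype.val Subtype.val_injective.injOn, ?_⟩
    rintro F xb ⟨x, hx, rfl⟩ yb ⟨y, hy, rfl⟩ hagree
    have hy' : (fun g => if g ∈ H then y g else x g) ∈ X :=
      splice_subgroup X hX H K hKH hSI hx hy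
    set y' : G → A := fun g => if g ∈ H then y g else x g with hy'def
    set F' : Finset G := F.map ⟨Subtype.val, Subtype.val_injective⟩ with hF'def
    have hmemF' : ∀ h : H, (h : G) ∈ F' ↔ h ∈ F := by
      intro h
      constructor
      · intro hh
        obtain ⟨a, ha, hav⟩ := Finset.mem_map.mp hh
        have : a = h := Subtype.val_injective hav
        rwa [← this]
      · intro hh
        exact Finset.mem_map.mpr ⟨h, hh, rfl⟩
    have hz := hM F' x hx y' hy' ?_
    · refine ⟨_, hz, ?_⟩
      funext h
      by_cases hF : h ∈ F
      · have h1 : (h : G) ∈ F' := (hmemF' h).mpr hF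
        simp [restrictH, h1, hF]
      · have h1 : (h : G) ∉ F' := fun c => hF ((hmemF' h).mp c)
        simp [restrictH, h1, hF, hy'def, h.2]
    · rintro g ⟨f, hf, m, hm, rfl⟩ hgF
      obtain ⟨f', hf', rfl⟩ := Finset.mem_map.mp hf
      by_cases hgH : ((f' : G) * m : G) ∈ H
      · have hmH : m ∈ H := by
          have h1 : ((f' : G))⁻¹ * ((f' : G) * m) ∈ H := H.mul_mem (H.inv_mem f'.2) hgH
          simpa using h1
        have hm' : (⟨m, hmH⟩ : H) ∈ M.preimage Subtype.val Subtype.val_injective.injOn :=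
          Finset.mem_preimage.mpr hm
      -- apply hagree
        have hne : (⟨(f' : G) * m, hgH⟩ : H) ∉ F := by
          intro hc
          exact hgF ((hmemF' _).mpr hc)
        have := hagree ⟨(f' : G) * m, hgH⟩ ⟨f', hf', ⟨m, hmH⟩, hm', by ext; simp⟩ hne
        simpa [restrictH, hy'def, hgH] using this
      · simp [hy'def, hgH]
  · rintro ⟨M', hM'⟩
    have hM'' : ∀ F : Finset ↥H, ∀ xb ∈ restrictH H '' X, ∀ yb ∈ restrictH H '' X,
        (∀ g : ↥H, (∃ f ∈ F, ∃ m ∈ M', g = f * m) → g ∉ F → xb g = yb g) →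
        ∃ w ∈ restrictH H '' X, (∀ g ∈ F, w g = xb g) ∧ (∀ g ∉ F, w g = yb g) := by
      intro F xb hxb yb hyb hag
      refine ⟨_, hM' F xb hxb yb hyb hag, ?_, ?_⟩
      · intro g hg; simp [hg]
      · intro g hg; simp [hg]
    refine ⟨M'.map ⟨Subtype.val, Subtype.val_injective⟩, ?_⟩
    intro F x hx y hy hagree
    exact splice_main X hX H K hKH hSI M' hM'' F.card F le_rfl x hx y hy hagree
end

section
/- Let r ≥ 4 and let G be a finitely generated group, with word metric d from a finite symmetric generating set, such that some element of G has word length greater than 38r. Then for every g ∈ G with |g| ≤ 38r, there exists h ∈ G with hB(r) ⊆ B(6r, 37r) ∩ gB(6r, 37r), where B(r) is the ball of radius r and B(a, b) = {x : a < |x| ≤ b}. -/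
/-- The word length of `g` with respect to a generating set `S`: the least length of a
word in the elements of `S` whose product is `g`. -/
noncomputable def wordLength {G : Type*} [Group G] (S : Finset G) (g : G) : ℕ :=
  sInf {n : ℕ | ∃ l : List G, (∀ s ∈ l, s ∈ S) ∧ l.length = n ∧ l.prod = g}

section WLAux

variable {G : Type*} [Group G] (S : Finset G)

lemma wl_set_nonempty (hsym : ∀ s ∈ S, s⁻¹ ∈ S)
    (hgen : Subgroup.closure (S : Set G) = ⊤) (g : G) :
    {n : ℕ | ∃ l : List G, (∀ s ∈ l, s ∈ S) ∧ l.length = n ∧ l.prod = g}.Nonempty := by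
  have hg : g ∈ Submonoid.closure ((S : Set G) ∪ (S : Set G)⁻¹) := by
    have : g ∈ (Subgroup.closure (S : Set G)).toSubmonoid := by
      rw [hgen]; trivial
    rwa [Subgroup.closure_toSubmonoid] at this
  obtain ⟨l, hl, hprod⟩ := Submonoid.exists_list_of_mem_closure hg
  refine ⟨l.length, l, ?_, rfl, hprod⟩
  intro s hs
  rcases hl s hs with h | h
  · exact h
  · have : s⁻¹ ∈ S := h
    have := hsym _ this
    simpa using this

lemma wl_le (g : G) (l : List G) (hl : ∀ s ∈ l, s ∈ S) (hprod : l.prod = g) :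
    wordLength S g ≤ l.length :=
  Nat.sInf_le ⟨l, hl, rfl, hprod⟩

lemma wl_exists_geodesic (hsym : ∀ s ∈ S, s⁻¹ ∈ S)
    (hgen : Subgroup.closure (S : Set G) = ⊤) (g : G) :
    ∃ l : List G, (∀ s ∈ l, s ∈ S) ∧ l.length = wordLength S g ∧ l.prod = g :=
  Nat.sInf_mem (wl_set_nonempty S hsym hgen g)

lemma wl_mul_le (hsym : ∀ s ∈ S, s⁻¹ ∈ S)
    (hgen : Subgroup.closure (S : Set G) = ⊤) (a b : G) :
    wordLength S (a * b) ≤ wordLength S a + wordLength S b := by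
  obtain ⟨la, hla, hlena, hproda⟩ := wl_exists_geodesic S hsym hgen a
  obtain ⟨lb, hlb, hlenb, hprodb⟩ := wl_exists_geodesic S hsym hgen b
  have := wl_le S (a * b) (la ++ lb) (by
      intro s hs
      rcases List.mem_append.mp hs with h | h
      exacts [hla s h, hlb s h])
    (by rw [List.prod_append, hproda, hprodb])
  simpa [hlena, hlenb] using this

lemma wl_inv_le (hsym : ∀ s ∈ S, s⁻¹ ∈ S)
    (hgen : Subgroup.closure (S : Set G) = ⊤) (a : G) :
    wordLength S a⁻¹ ≤ wordLength S a := by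
  obtain ⟨l, hl, hlen, hprod⟩ := wl_exists_geodesic S hsym hgen a
  have := wl_le S a⁻¹ ((l.map (·⁻¹)).reverse) (by
      intro s hs
      rw [List.mem_reverse, List.mem_map] at hs
      obtain ⟨x, hx, rfl⟩ := hs
      exact hsym _ (hl _ hx))
    (by rw [← List.prod_inv_reverse, hprod])
  simpa [hlen] using this

lemma wl_inv (hsym : ∀ s ∈ S, s⁻¹ ∈ S)
    (hgen : Subgroup.closure (S : Set G) = ⊤) (a : G) :
    wordLength S a⁻¹ = wordLength S a := by
  refine le_antisymm (wl_inv_le S hsym hgen a) ?_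
  have := wl_inv_le S hsym hgen a⁻¹
  simpa using this

/-- Geodesic prefix: for any `t ≤ |g|` there is `h` with `|h| = t` and `|h⁻¹g| = |g| - t`. -/
lemma wl_prefix (hsym : ∀ s ∈ S, s⁻¹ ∈ S)
    (hgen : Subgroup.closure (S : Set G) = ⊤) (g : G) (t : ℕ) (ht : t ≤ wordLength S g) :
    ∃ h : G, wordLength S h = t ∧ wordLength S (h⁻¹ * g) = wordLength S g - t := by
  obtain ⟨l, hl, hlen, hprod⟩ := wl_exists_geodesic S hsym hgen g
  set h : G := (l.take t).prod with hh
  refine ⟨h, ?_⟩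
  have h1 : wordLength S h ≤ t := by
    have := wl_le S h (l.take t) (fun s hs => hl s (List.mem_of_mem_take hs)) rfl
    calc wordLength S h ≤ (l.take t).length := this
      _ ≤ t := by simp [List.length_take]
  have h2 : wordLength S (h⁻¹ * g) ≤ wordLength S g - t := by
    have hp : (l.drop t).prod = h⁻¹ * g := by
      have : h * (l.drop t).prod = g := by
        rw [hh, ← List.prod_append, List.take_append_drop, hprod]
      group
      rw [← this]
      group
    have := wl_le S (h⁻¹ * g) (l.drop t) (fun s hs => hl s (List.mem_of_mem_drop hs)) hp
    calc wordLength S (h⁻¹ * g) ≤ (l.drop t).length := this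
      _ = wordLength S g - t := by simp [List.length_drop, hlen]
  have h3 : wordLength S g ≤ wordLength S h + wordLength S (h⁻¹ * g) := by
    have := wl_mul_le S hsym hgen h (h⁻¹ * g)
    simpa using this
  omega

end WLAux

/-- if `r ≥ 4` and some element of `G` has word length `> 38r`, then for
every `g` with `|g| ≤ 38r` there exists `h` with `h·B(r) ⊆ B(6r,37r) ∩ g·B(6r,37r)`,
where `B(a,b) = {x : a < |x| ≤ b}`. -/
theorem stmt15 {G : Type*} [Group G] (S : Finset G) (hsym : ∀ s ∈ S, s⁻¹ ∈ S)
    (hgen : Subgroup.closure (S : Set G) = ⊤) (r : ℕ) (hr : 4 ≤ r)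
    (hdiam : ∃ g₀ : G, 38 * r < wordLength S g₀) :
    ∀ g : G, wordLength S g ≤ 38 * r →
      ∃ h : G, ∀ u : G, wordLength S u ≤ r →
        (6 * r < wordLength S (h * u) ∧ wordLength S (h * u) ≤ 37 * r) ∧
        (6 * r < wordLength S (g⁻¹ * (h * u)) ∧ wordLength S (g⁻¹ * (h * u)) ≤ 37 * r) := by
  intro g hg
  -- triangle inequality helpers
  have tri : ∀ a b : G, wordLength S (a * b) ≤ wordLength S a + wordLength S b :=
    wl_mul_le S hsym hgen
  have tri' : ∀ a b : G, wordLength S a ≤ wordLength S (a * b) + wordLength S b := by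
    intro a b
    have := tri (a * b) b⁻¹
    rw [wl_inv S hsym hgen] at this
    simpa using this
  -- It suffices to find h with 7r+1 ≤ |h| ≤ 36r and 7r+1 ≤ |g⁻¹h| ≤ 36r.
  suffices hs : ∃ h : G, (7 * r + 1 ≤ wordLength S h ∧ wordLength S h ≤ 36 * r) ∧
      (7 * r + 1 ≤ wordLength S (g⁻¹ * h) ∧ wordLength S (g⁻¹ * h) ≤ 36 * r) by
    obtain ⟨h, ⟨hh1, hh2⟩, hg1, hg2⟩ := hs
    refine ⟨h, fun u hu => ?_⟩
    have t1 := tri h u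
    have t2 := tri' h u
    have t3 : wordLength S (g⁻¹ * (h * u)) ≤ wordLength S (g⁻¹ * h) + wordLength S u := by
      have := tri (g⁻¹ * h) u
      simpa [mul_assoc] using this
    have t4 : wordLength S (g⁻¹ * h) ≤ wordLength S (g⁻¹ * (h * u)) + wordLength S u := by
      have := tri' (g⁻¹ * h) u
      simpa [mul_assoc] using this
    omega
  by_cases hc : wordLength S g ≤ 14 * r + 1
  · -- use a prefix of length |g| + 7r + 1 of a geodesic to the far element g₀
    obtain ⟨g₀, hg₀⟩ := hdiam
    obtain ⟨h, hh, _⟩ := wl_prefix S hsym hgen g₀ (wordLength S g + 7 * r + 1) (by omega)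
    refine ⟨h, ⟨by omega, by omega⟩, ?_, ?_⟩
    · -- |g⁻¹h| ≥ |h| - |g|
      have := tri g (g⁻¹ * h)
      simp only [mul_inv_cancel_left] at this
      omega
    · have := tri g⁻¹ h
      rw [wl_inv S hsym hgen] at this
      omega
  · -- use a prefix of g itself of length |g| - (7r+1)
    obtain ⟨h, hh, hh'⟩ := wl_prefix S hsym hgen g (wordLength S g - (7 * r + 1)) (by omega)
    have hgi : wordLength S (g⁻¹ * h) = 7 * r + 1 := by
      have : g⁻¹ * h = (h⁻¹ * g)⁻¹ := by group
      rw [this, wl_inv S hsym hgen, hh']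
      omega
    exact ⟨h, ⟨by omega, by omega⟩, by omega, by omega⟩
end

section
/- Let G be a finitely generated nonamenable group with finite symmetric generating set S. Then there exists a constant C ≥ 1 such that for every positive integer m and every m-covering subset Δ ⊆ G, there exists a bijection φ : G → Δ with d_S(g, φ(g)) ≤ Cm for all g ∈ G. -/
open scoped Pointwise

/-- `G` is nonamenable: there are a finite `T` and `δ > 0` with `|FT ∖ F| > δ|F|` for
every finite nonempty `F ⊆ G`. -/
def IsNonamenable (G : Type*) [Group G] [DecidableEq G] : Prop :=
  ∃ T : Finset G, ∃ δ : ℝ, 0 < δ ∧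
    ∀ F : Finset G, F.Nonempty → δ * (F.card : ℝ) < (((F * T) \ F).card : ℝ)

/-- Schröder–Bernstein with the property that the bijection agrees with `f` or `g⁻¹`. -/
theorem sb_exists {α β : Type*} (f : α → β) (g : β → α)
    (hf : Function.Injective f) (hg : Function.Injective g) :
    ∃ e : α ≃ β, ∀ a, e a = f a ∨ g (e a) = a := by
  classical
  by_cases hβ : Nonempty β
  · set s : Set α := ⋃ n, (g ∘ f)^[n] '' (Set.range g)ᶜ with hs
    have hsub : ∀ a ∈ s, g (f a) ∈ s := by
      intro a ha
      obtain ⟨n, c, hc, rfl⟩ : ∃ n c, c ∈ (Set.range g)ᶜ ∧ (g ∘ f)^[n] c = a := by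
        simpa [hs, Set.mem_iUnion] using ha
      refine Set.mem_iUnion.2 ⟨n + 1, c, hc, ?_⟩
      rw [Function.iterate_succ_apply']; rfl
    have hrange : ∀ a, a ∉ s → a ∈ Set.range g := by
      intro a ha
      by_contra h
      exact ha (Set.mem_iUnion.2 ⟨0, by simpa using h⟩)
    let h : α → β := fun a => if a ∈ s then f a else Function.invFun g a
    have hout : ∀ a, a ∉ s → g (h a) = a := by
      intro a ha
      simp only [h, if_neg ha]
      exact Function.invFun_eq (hrange a ha)
    have hin : ∀ a, a ∈ s → h a = f a := fun a ha => if_pos ha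
    have hinj : Function.Injective h := by
      intro a b hab
      by_cases ha : a ∈ s <;> by_cases hb : b ∈ s
      · exact hf (by rwa [hin a ha, hin b hb] at hab)
      · exfalso
        apply hb
        have : g (h a) = b := by rw [hab]; exact hout b hb
        rw [hin a ha] at this
        rw [← this]
        exact hsub a ha
      · exfalso
        apply ha
        have : g (h b) = a := by rw [← hab]; exact hout a ha
        rw [hin b hb] at this
        rw [← this]
        exact hsub b hb
      · rw [← hout a ha, ← hout b hb, hab]
    have hsurj : Function.Surjective h := by
      intro b
      by_cases hgb : g b ∈ s
      · obtain ⟨n, c, hc, hcb⟩ : ∃ n c, c ∈ (Set.range g)ᶜ ∧ (g ∘ f)^[n] c = g b := by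
          simpa [hs, Set.mem_iUnion] using hgb
        cases n with
        | zero =>
          simp only [Function.iterate_zero, id_eq] at hcb
          exact absurd (Set.mem_range.2 ⟨b, rfl⟩) (by rwa [hcb] at hc)
        | succ n =>
          rw [Function.iterate_succ_apply'] at hcb
          have ha : (g ∘ f)^[n] c ∈ s := Set.mem_iUnion.2 ⟨n, c, hc, rfl⟩
          refine ⟨(g ∘ f)^[n] c, ?_⟩
          rw [hin _ ha]
          exact hg hcb
      · refine ⟨g b, ?_⟩
        have := hout (g b) hgb
        exact hg this
    refine ⟨Equiv.ofBijective h ⟨hinj, hsurj⟩, fun a => ?_⟩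
    by_cases ha : a ∈ s
    · exact Or.inl (hin a ha)
    · exact Or.inr (hout a ha)
  · have hα : IsEmpty α := ⟨fun a => hβ ⟨f a⟩⟩
    have hβ' : IsEmpty β := not_nonempty_iff.1 hβ
    exact ⟨Equiv.equivOfIsEmpty α β, fun a => hα.elim a⟩

section Balls

variable {G : Type*} [Group G] [DecidableEq G] (S : Finset G)

/-- The ball of radius `n`: products of at most `n` generators. -/
def ball (n : ℕ) : Finset G := (insert (1 : G) S) ^ n

theorem mem_ball_iff {n : ℕ} {g : G} :
    g ∈ ball S n ↔ ∃ l : List G, (∀ s ∈ l, s ∈ S) ∧ l.length ≤ n ∧ l.prod = g := by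
  induction n generalizing g with
  | zero =>
    simp only [ball, pow_zero, Finset.mem_one]
    constructor
    · rintro rfl; exact ⟨[], by simp⟩
    · rintro ⟨l, -, hl, rfl⟩
      rw [Nat.le_zero, List.length_eq_zero_iff] at hl
      simp [hl]
  | succ n ih =>
    rw [ball, pow_succ', Finset.mem_mul]
    constructor
    · rintro ⟨a, ha, b, hb, rfl⟩
      obtain ⟨l, hlS, hll, rfl⟩ := ih.1 hb
      rcases Finset.mem_insert.1 ha with rfl | haS
      · exact ⟨l, hlS, hll.trans (Nat.le_succ n), by rw [one_mul]⟩
      · exact ⟨a :: l, by simp [haS, hlS] ; tauto, by simpa using Nat.succ_le_succ hll, by simp⟩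
    · rintro ⟨l, hlS, hll, rfl⟩
      cases l with
      | nil =>
        exact ⟨1, Finset.mem_insert_self _ _, 1, ih.2 ⟨[], by simp⟩, by simp⟩
      | cons a l =>
        refine ⟨a, Finset.mem_insert.2 (Or.inr (hlS a (by simp))), l.prod,
          ih.2 ⟨l, fun s hs => hlS s (by simp [hs]), by simpa using Nat.succ_le_succ_iff.1 hll, rfl⟩, by simp⟩

theorem one_mem_ball (n : ℕ) : (1 : G) ∈ ball S n :=
  (mem_ball_iff S).2 ⟨[], by simp⟩

theorem ball_mono {a b : ℕ} (h : a ≤ b) : ball S a ⊆ ball S b := by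
  intro g hg
  obtain ⟨l, h1, h2, h3⟩ := (mem_ball_iff S).1 hg
  exact (mem_ball_iff S).2 ⟨l, h1, h2.trans h, h3⟩

theorem mul_mem_ball {a b : ℕ} {x y : G} (hx : x ∈ ball S a) (hy : y ∈ ball S b) :
    x * y ∈ ball S (a + b) := by
  rw [ball, pow_add]; exact Finset.mul_mem_mul hx hy

theorem inv_mem_ball (hsym : ∀ s ∈ S, s⁻¹ ∈ S) {n : ℕ} {g : G} (hg : g ∈ ball S n) :
    g⁻¹ ∈ ball S n := by
  obtain ⟨l, h1, h2, rfl⟩ := (mem_ball_iff S).1 hg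
  refine (mem_ball_iff S).2 ⟨(l.map fun x => x⁻¹).reverse, ?_, by simpa using h2,
    (List.prod_inv_reverse l).symm⟩
  intro s hs
  simp only [List.mem_reverse, List.mem_map] at hs
  obtain ⟨x, hx, rfl⟩ := hs
  exact hsym x (h1 x hx)

theorem card_ball_le (n : ℕ) : (ball S n).card ≤ (S.card + 1) ^ n := by
  induction n with
  | zero => simp [ball]
  | succ n ih =>
    rw [ball, pow_succ]
    calc ((insert (1:G) S) ^ n * insert 1 S).card
        ≤ ((insert (1:G) S) ^ n).card * (insert (1:G) S).card := Finset.card_mul_le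
      _ ≤ (S.card + 1) ^ n * (S.card + 1) := by
          exact Nat.mul_le_mul ih (by simpa [add_comm] using Finset.card_insert_le (1:G) S)
      _ = (S.card + 1) ^ (n + 1) := (pow_succ _ _).symm

theorem wordLength_le_iff (hgen : Subgroup.closure (S : Set G) = ⊤)
    (hsym : ∀ s ∈ S, s⁻¹ ∈ S) {g : G} {n : ℕ} :
    wordLength S g ≤ n ↔ g ∈ ball S n := by
  have hne : ∃ l : List G, (∀ s ∈ l, s ∈ S) ∧ l.prod = g := by
    have hg : g ∈ Subgroup.closure (S : Set G) := hgen ▸ Subgroup.mem_top g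
    induction hg using Subgroup.closure_induction with
    | mem x hx => exact ⟨[x], by simpa using hx, by simp⟩
    | one => exact ⟨[], by simp⟩
    | mul x y _ _ hx hy =>
      obtain ⟨l1, h1, rfl⟩ := hx
      obtain ⟨l2, h2, rfl⟩ := hy
      refine ⟨l1 ++ l2, fun s hs => ?_, by simp⟩
      rcases List.mem_append.1 hs with h | h
      exacts [h1 s h, h2 s h]
    | inv x _ hx =>
      obtain ⟨l, h1, rfl⟩ := hx
      refine ⟨(l.map fun x => x⁻¹).reverse, ?_, (List.prod_inv_reverse l).symm⟩
      intro s hs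
      simp only [List.mem_reverse, List.mem_map] at hs
      obtain ⟨x, hx', rfl⟩ := hs
      exact hsym x (h1 x hx')
  have hset : {k : ℕ | ∃ l : List G, (∀ s ∈ l, s ∈ S) ∧ l.length = k ∧ l.prod = g}.Nonempty := by
    obtain ⟨l, h1, h2⟩ := hne
    exact ⟨l.length, l, h1, rfl, h2⟩
  constructor
  · intro h
    obtain ⟨l, h1, h2, h3⟩ := Nat.sInf_mem hset
    exact (mem_ball_iff S).2 ⟨l, h1, h2 ▸ h, h3⟩
  · intro h
    obtain ⟨l, h1, h2, h3⟩ := (mem_ball_iff S).1 h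
    exact le_trans (Nat.sInf_le ⟨l, h1, rfl, h3⟩) h2

end Balls

section Growth
variable {G : Type*} [Group G] [DecidableEq G] {S : Finset G}

theorem growth_step (hgen : Subgroup.closure (S : Set G) = ⊤) (hsym : ∀ s ∈ S, s⁻¹ ∈ S)
    (hna : IsNonamenable G) :
    ∃ r : ℕ, ∃ δ : ℝ, 0 < δ ∧ ∀ F : Finset G, F.Nonempty →
      (1 + δ) * (F.card : ℝ) ≤ (((F * ball S r).card : ℕ) : ℝ) := by
  obtain ⟨T, δ, hδ, hT⟩ := hna
  refine ⟨T.sup (wordLength S), δ, hδ, fun F hF => ?_⟩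
  set r := T.sup (wordLength S)
  have hTb : (T : Set G) ⊆ (ball S r : Set G) := by
    intro t ht
    exact (wordLength_le_iff S hgen hsym).1 (Finset.le_sup (by exact_mod_cast ht))
  have hsub : F ∪ F * T ⊆ F * ball S r := by
    apply Finset.union_subset
    · intro x hx
      have := Finset.mul_mem_mul hx (one_mem_ball S r)
      simpa using this
    · exact Finset.mul_subset_mul_left (by exact_mod_cast hTb)
  have hcard : F.card + ((F * T) \ F).card ≤ (F * ball S r).card := by
    have h1 : ((F * T) \ F).card + F.card = ((F * T) ∪ F).card :=
      Finset.card_sdiff_add_card (F * T) F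
    have h2 : (F * T) ∪ F = F ∪ F * T := Finset.union_comm _ _
    calc F.card + ((F * T) \ F).card = ((F * T) ∪ F).card := by omega
      _ ≤ (F * ball S r).card := Finset.card_le_card (h2 ▸ hsub)
  have := hT F hF
  have hc : (F.card : ℝ) + (((F * T) \ F).card : ℝ) ≤ ((F * ball S r).card : ℝ) := by
    exact_mod_cast hcard
  nlinarith [this, hc]

theorem growth_iter {r : ℕ} {δ : ℝ} (hδ : 0 < δ)
    (hstep : ∀ F : Finset G, F.Nonempty → (1 + δ) * (F.card : ℝ) ≤ ((F * ball S r).card : ℝ))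
    (k : ℕ) (F : Finset G) (hF : F.Nonempty) :
    (1 + δ) ^ k * (F.card : ℝ) ≤ ((F * ball S (k * r)).card : ℝ) := by
  induction k with
  | zero =>
    simp only [pow_zero, one_mul, Nat.zero_mul]
    have : F ⊆ F * ball S 0 := by
      intro x hx
      simpa using Finset.mul_mem_mul hx (one_mem_ball S 0)
    exact_mod_cast Finset.card_le_card this
  | succ k ih =>
    have hne : (F * ball S (k * r)).Nonempty := by
      obtain ⟨x, hx⟩ := hF
      exact ⟨x * 1, Finset.mul_mem_mul hx (one_mem_ball S _)⟩
    have hmul : (F * ball S (k * r)) * ball S r ⊆ F * ball S ((k + 1) * r) := by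
      rw [mul_assoc]
      apply Finset.mul_subset_mul_left
      intro x hx
      rw [Finset.mem_mul] at hx
      obtain ⟨a, ha, b, hb, rfl⟩ := hx
      have := mul_mem_ball S ha hb
      exact ball_mono S (by ring_nf; omega) this
    calc (1 + δ) ^ (k + 1) * (F.card : ℝ)
        = (1 + δ) * ((1 + δ) ^ k * F.card) := by ring
      _ ≤ (1 + δ) * ((F * ball S (k * r)).card : ℝ) := by
          apply mul_le_mul_of_nonneg_left ih (by linarith)
      _ ≤ (((F * ball S (k * r)) * ball S r).card : ℝ) := hstep _ hne
      _ ≤ ((F * ball S ((k + 1) * r)).card : ℝ) := by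
          exact_mod_cast Finset.card_le_card hmul

end Growth

/-- in a finitely generated nonamenable group there is `C ≥ 1` such that
for every `m ≥ 1` and every `m`-covering set `Δ`, there is a bijection `φ : G → Δ`
moving every point at distance at most `Cm`. -/
theorem stmt18 {G : Type*} [Group G] [DecidableEq G] (S : Finset G)
    (hsym : ∀ s ∈ S, s⁻¹ ∈ S) (hgen : Subgroup.closure (S : Set G) = ⊤)
    (hna : IsNonamenable G) :
    ∃ C : ℕ, 1 ≤ C ∧ ∀ m : ℕ, 0 < m → ∀ Δ : Set G,
      (∀ h : G, ∃ x ∈ Δ, wordLength S (x⁻¹ * h) ≤ m) →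
      ∃ φ : G ≃ Δ, ∀ g : G, wordLength S (g⁻¹ * (φ g : G)) ≤ C * m := by
  classical
  obtain ⟨r, δ, hδ, hstep⟩ := growth_step hgen hsym hna
  obtain ⟨a, ha⟩ : ∃ a : ℕ, ((S.card : ℝ) + 1) < (1 + δ) ^ a :=
    pow_unbounded_of_one_lt _ (by linarith)
  refine ⟨a * r + 1, by omega, fun m hm Δ hΔ => ?_⟩
  set D := (a * r + 1) * m with hD
  choose cov covΔ covd using hΔ
  have covb : ∀ h : G, (cov h)⁻¹ * h ∈ ball S m :=
    fun h => (wordLength_le_iff S hgen hsym).1 (covd h)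
  -- the neighbor finsets
  let t : G → Finset Δ := fun g => (Finset.image (g * ·) (ball S D)).subtype (· ∈ Δ)
  have memt : ∀ (g : G) (x : Δ), x ∈ t g ↔ g⁻¹ * (x : G) ∈ ball S D := by
    intro g x
    simp only [t, Finset.mem_subtype, Finset.mem_image]
    constructor
    · rintro ⟨p, hp, hpx⟩
      rwa [← hpx, inv_mul_cancel_left]
    · intro h
      exact ⟨g⁻¹ * (x : G), h, by group⟩
  -- the key card bound on balls
  have hPm : ((ball S m : Finset G).card : ℝ) ≤ (1 + δ) ^ (a * m) := by
    calc ((ball S m : Finset G).card : ℝ) ≤ ((S.card + 1 : ℕ) : ℝ) ^ m := by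
          exact_mod_cast card_ball_le S m
      _ ≤ ((1 + δ) ^ a) ^ m := by
          apply pow_le_pow_left₀ (by positivity)
          push_cast
          linarith
      _ = (1 + δ) ^ (a * m) := by rw [← pow_mul]
  -- Hall condition, left side
  have hallL : ∀ s : Finset G, s.card ≤ (s.biUnion t).card := by
    intro s
    rcases s.eq_empty_or_nonempty with rfl | hs
    · simp
    set A := s * ball S (a * m * r) with hA
    have h1 : (1 + δ) ^ (a * m) * (s.card : ℝ) ≤ (A.card : ℝ) := by
      have := growth_iter hδ hstep (a * m) s hs
      rwa [show a * m * r = a * m * r from rfl] at this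
    have h2 : A.card ≤ (ball S m : Finset G).card * (A.image cov).card := by
      apply Finset.card_le_mul_card_image
      intro b _
      have hsub : {h ∈ A | cov h = b} ⊆ Finset.image (b * ·) (ball S m) := by
        intro h hh
        rw [Finset.mem_filter] at hh
        obtain ⟨_, hcov⟩ := hh
        have := covb h
        rw [hcov] at this
        exact Finset.mem_image.2 ⟨b⁻¹ * h, this, by group⟩
      calc {h ∈ A | cov h = b}.card ≤ (Finset.image (b * ·) (ball S m)).card :=
            Finset.card_le_card hsub
        _ = (ball S m : Finset G).card :=
            Finset.card_image_of_injective _ (mul_right_injective b)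
    have h3 : A.image cov ⊆ (s.biUnion t).image Subtype.val := by
      intro x hx
      obtain ⟨h, hh, rfl⟩ := Finset.mem_image.1 hx
      rw [hA, Finset.mem_mul] at hh
      obtain ⟨g, hg, p, hp, rfl⟩ := hh
      have hxb : g⁻¹ * cov (g * p) ∈ ball S D := by
        have e1 : g⁻¹ * cov (g * p) = p * ((g * p)⁻¹ * cov (g * p)) := by group
        have e2 : (g * p)⁻¹ * cov (g * p) ∈ ball S m := by
          have := inv_mem_ball S hsym (covb (g * p))
          rwa [mul_inv_rev, inv_inv] at this
        rw [e1]
        have := mul_mem_ball S hp e2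
        exact ball_mono S (by rw [hD]; ring_nf; omega) this
      refine Finset.mem_image.2 ⟨⟨cov (g * p), covΔ (g * p)⟩, ?_, rfl⟩
      exact Finset.mem_biUnion.2 ⟨g, hg, (memt g _).2 hxb⟩
    have h4 : (A.image cov).card ≤ (s.biUnion t).card := by
      calc (A.image cov).card ≤ ((s.biUnion t).image Subtype.val).card :=
            Finset.card_le_card h3
        _ = (s.biUnion t).card := Finset.card_image_of_injective _ Subtype.val_injective
    have hpos : (0 : ℝ) < ((ball S m : Finset G).card : ℝ) := by
      have : (ball S m : Finset G).Nonempty := ⟨1, one_mem_ball S m⟩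
      exact_mod_cast Finset.card_pos.2 this
    have chain : ((ball S m : Finset G).card : ℝ) * (s.card : ℝ) ≤
        ((ball S m : Finset G).card : ℝ) * ((s.biUnion t).card : ℝ) := by
      calc ((ball S m : Finset G).card : ℝ) * (s.card : ℝ)
          ≤ (1 + δ) ^ (a * m) * (s.card : ℝ) := by
            apply mul_le_mul_of_nonneg_right hPm (by positivity)
        _ ≤ (A.card : ℝ) := h1
        _ ≤ ((ball S m : Finset G).card : ℝ) * ((A.image cov).card : ℝ) := by
            exact_mod_cast h2
        _ ≤ ((ball S m : Finset G).card : ℝ) * ((s.biUnion t).card : ℝ) := by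
            apply mul_le_mul_of_nonneg_left _ (le_of_lt hpos)
            exact_mod_cast h4
    have := le_of_mul_le_mul_left chain hpos
    exact_mod_cast this
  obtain ⟨f, hfinj, hft⟩ := (Finset.all_card_le_biUnion_card_iff_exists_injective t).1 hallL
  -- Hall condition, right side
  let t' : Δ → Finset G := fun x => Finset.image ((x : G) * ·) (ball S D)
  have hallR : ∀ s : Finset Δ, s.card ≤ (s.biUnion t').card := by
    intro s
    have hsub : s.image Subtype.val ⊆ s.biUnion t' := by
      intro x hx
      obtain ⟨y, hy, rfl⟩ := Finset.mem_image.1 hx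
      exact Finset.mem_biUnion.2 ⟨y, hy,
        Finset.mem_image.2 ⟨1, one_mem_ball S D, mul_one _⟩⟩
    calc s.card = (s.image Subtype.val).card :=
          (Finset.card_image_of_injective _ Subtype.val_injective).symm
      _ ≤ (s.biUnion t').card := Finset.card_le_card hsub
  obtain ⟨g', hg'inj, hg't⟩ := (Finset.all_card_le_biUnion_card_iff_exists_injective t').1 hallR
  obtain ⟨e, he⟩ := sb_exists f g' hfinj hg'inj
  refine ⟨e, fun g => ?_⟩
  have key : g⁻¹ * ((e g : Δ) : G) ∈ ball S D := by
    rcases he g with h | h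
    · rw [h]
      exact (memt g (f g)).1 (hft g)
    · have := hg't (e g)
      obtain ⟨p, hp, hpe⟩ := Finset.mem_image.1 this
      have : ((e g : Δ) : G)⁻¹ * g ∈ ball S D := by
        have h2 : ((e g : Δ) : G)⁻¹ * g' (e g) ∈ ball S D := by
          rw [← hpe, inv_mul_cancel_left]; exact hp
        rwa [h] at h2
      have := inv_mem_ball S hsym this
      rwa [mul_inv_rev, inv_inv] at this
  exact (wordLength_le_iff S hgen hsym).2 key
end

section
/- Let G be a group such that the free group F_k (k ≥ 1) embeds into G. Then for every finite subset T ⊆ G there exist γ₁, …, γ_k ∈ G generating a subgroup isomorphic to F_k such that the family of translates {wT : w ∈ ⟨γ₁, …, γ_k⟩} is pairwise disjoint. -/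
namespace Stmt19Aux

open FreeGroup List

variable {α : Type*} [DecidableEq α]

/-- Two letters that do not cancel. -/
def Ok (a b : α × Bool) : Prop := ¬(a.1 = b.1 ∧ a.2 = !b.2)

lemma chain'_ok_reduce (L : List (α × Bool)) : List.Chain' Ok (FreeGroup.reduce L) := by
  induction L with
  | nil => simp [List.Chain']
  | cons x L ih =>
    rw [FreeGroup.reduce.cons]
    cases h : FreeGroup.reduce L with
    | nil => simp [List.Chain']
    | cons hd tl =>
      rw [h] at ih
      show List.Chain' Ok (if x.1 = hd.1 ∧ x.2 = !hd.2 then tl else x :: hd :: tl)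
      by_cases hc : x.1 = hd.1 ∧ x.2 = !hd.2
      · rw [if_pos hc]; exact ih.tail
      · rw [if_neg hc]
        exact List.isChain_cons_cons.2 ⟨hc, ih⟩

lemma reduce_eq_self_of_chain' {L : List (α × Bool)} (h : List.Chain' Ok L) :
    FreeGroup.reduce L = L := by
  induction L with
  | nil => rfl
  | cons x L ih =>
    rw [FreeGroup.reduce.cons, ih h.tail]
    cases L with
    | nil => rfl
    | cons hd tl =>
      have hok : Ok x hd := (List.isChain_cons_cons.1 h).1
      exact if_neg hok

lemma chain'_flatMap_replicate {n : ℕ} (hn : 1 ≤ n) {L : List (α × Bool)}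
    (h : List.Chain' Ok L) :
    List.Chain' Ok (L.flatMap fun x => List.replicate n x) := by
  induction L with
  | nil => simp [List.Chain']
  | cons x L ih =>
    rw [List.flatMap_cons]
    refine List.IsChain.append ?_ (ih h.tail) ?_
    · -- chain' on replicate n x
      apply List.isChain_replicate_of_rel
      rintro ⟨h1, h2⟩
      exact (Bool.eq_not_self x.2).mp h2
    · intro a ha b hb
      have hx : a = x := by
        have := List.mem_of_mem_getLast? ha
        simpa using List.eq_of_mem_replicate this
      subst hx
      cases L with
      | nil => simp at hb
      | cons y L' =>
        have hy : b = y := by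
          rw [List.flatMap_cons, List.head?_append_of_ne_nil] at hb
          · have := List.mem_of_mem_head? hb
            simpa using List.eq_of_mem_replicate this
          · simp only [ne_eq, List.replicate_eq_nil_iff]
            omega
        subst hy
        exact (List.isChain_cons_cons.1 h).1

lemma of_pow_eq_mk (a : α) (n : ℕ) (b : Bool) :
    (cond b (FreeGroup.of a ^ n) (FreeGroup.of a ^ n)⁻¹) =
      FreeGroup.mk (List.replicate n (a, b)) := by
  cases b
  · have h1 : FreeGroup.of a ^ n = FreeGroup.mk (List.replicate n (a, true)) := by
      conv_lhs => rw [← FreeGroup.mk_toWord (x := FreeGroup.of a ^ n)]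
      rw [FreeGroup.toWord_of_pow]
    rw [cond_false, h1, FreeGroup.inv_mk]
    congr 1
    simp [FreeGroup.invRev]
  · conv_lhs => rw [cond_true, ← FreeGroup.mk_toWord (x := FreeGroup.of a ^ n)]
    rw [FreeGroup.toWord_of_pow]

lemma lift_pow_mk (n : ℕ) (L : List (α × Bool)) :
    FreeGroup.lift (fun i => FreeGroup.of i ^ n) (FreeGroup.mk L) =
      FreeGroup.mk (L.flatMap fun x => List.replicate n x) := by
  induction L with
  | nil => simp [FreeGroup.one_eq_mk, FreeGroup.lift_mk]
  | cons x L ih =>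
    have : FreeGroup.mk (x :: L) = FreeGroup.mk [x] * FreeGroup.mk L := by
      rw [FreeGroup.mul_mk]; rfl
    rw [this, MonoidHom.map_mul, ih, List.flatMap_cons, ← FreeGroup.mul_mk]
    congr 1
    rw [FreeGroup.lift_mk]
    simp only [List.map_cons, List.map_nil, List.prod_cons, List.prod_nil, mul_one]
    exact of_pow_eq_mk x.1 n x.2

lemma norm_lift_pow {n : ℕ} (hn : 1 ≤ n) (x : FreeGroup α) :
    FreeGroup.norm (FreeGroup.lift (fun i => FreeGroup.of i ^ n) x) =
      n * FreeGroup.norm x := by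
  have hred : List.Chain' Ok x.toWord := by
    rw [← FreeGroup.reduce_toWord]
    exact chain'_ok_reduce _
  conv_lhs => rw [← FreeGroup.mk_toWord (x := x)]
  rw [lift_pow_mk]
  have h2 : FreeGroup.norm (FreeGroup.mk (x.toWord.flatMap fun y => List.replicate n y)) =
      (x.toWord.flatMap fun y => List.replicate n y).length := by
    rw [FreeGroup.norm, FreeGroup.toWord_mk,
      reduce_eq_self_of_chain' (chain'_flatMap_replicate hn hred)]
  rw [h2]
  rw [FreeGroup.norm, List.length_flatMap]
  simp only [Function.comp_def, List.length_replicate, List.map_const']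
  rw [List.sum_replicate, smul_eq_mul, Nat.mul_comm]

end Stmt19Aux


/-- if the free group `F_k` (`k ≥ 1`) embeds into `G`, then for every
finite `T ⊆ G` there are `γ₁, …, γ_k ∈ G` generating a free subgroup of rank `k`
(i.e. `FreeGroup.lift γ` is injective) whose translates `{wT : w ∈ ⟨γ₁,…,γ_k⟩}` are
pairwise disjoint. -/
theorem stmt19 {G : Type*} [Group G] (k : ℕ) (hk : 1 ≤ k)
    (hemb : ∃ ψ : FreeGroup (Fin k) →* G, Function.Injective ψ) (T : Finset G) :
    ∃ γ : Fin k → G, Function.Injective (FreeGroup.lift γ) ∧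
      ∀ u v : FreeGroup (Fin k), u ≠ v → ∀ t ∈ T, ∀ t' ∈ T,
        (FreeGroup.lift γ) u * t ≠ (FreeGroup.lift γ) v * t' := by
  classical
  obtain ⟨ψ, hψ⟩ := hemb
  set S : Finset G := Finset.image₂ (fun t' t => t' * t⁻¹) T T with hS
  set B : Finset (FreeGroup (Fin k)) := S.preimage ψ hψ.injOn with hB
  set n : ℕ := B.sup FreeGroup.norm + 1 with hn
  have hn1 : 1 ≤ n := Nat.le_add_left 1 _
  set φ : FreeGroup (Fin k) →* FreeGroup (Fin k) :=
    FreeGroup.lift (fun i => FreeGroup.of i ^ n) with hφ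
  have hnorm : ∀ x : FreeGroup (Fin k), FreeGroup.norm (φ x) = n * FreeGroup.norm x :=
    fun x => Stmt19Aux.norm_lift_pow hn1 x
  have hφinj : Function.Injective φ := by
    refine (injective_iff_map_eq_one φ).2 fun x hx => ?_
    have := hnorm x
    rw [hx, FreeGroup.norm_one] at this
    have : FreeGroup.norm x = 0 := by
      rcases Nat.mul_eq_zero.1 this.symm with h | h
      · omega
      · exact h
    exact FreeGroup.norm_eq_zero.1 this
  refine ⟨fun i => ψ (FreeGroup.of i ^ n), ?_, ?_⟩
  · have key : FreeGroup.lift (fun i => ψ (FreeGroup.of i ^ n)) = ψ.comp φ := by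
      ext i
      simp [hφ]
    rw [key]
    exact hψ.comp hφinj
  · intro u v huv t ht t' ht' heq
    have key : ∀ x, FreeGroup.lift (fun i => ψ (FreeGroup.of i ^ n)) x = ψ (φ x) := by
      intro x
      have : FreeGroup.lift (fun i => ψ (FreeGroup.of i ^ n)) = ψ.comp φ := by
        ext i; simp [hφ]
      rw [this]; rfl
    rw [key, key] at heq
    have hmem : ψ (φ (v⁻¹ * u)) = t' * t⁻¹ := by
      have h2 : (ψ (φ v))⁻¹ * (ψ (φ u) * t) * t⁻¹ = (ψ (φ v))⁻¹ * (ψ (φ v) * t') * t⁻¹ := by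
        rw [heq]
      rw [map_mul, map_inv, map_mul, map_inv]
      simpa [mul_assoc] using h2
    have hBmem : φ (v⁻¹ * u) ∈ B := by
      rw [hB, Finset.mem_preimage, hmem, hS]
      exact Finset.mem_image₂_of_mem ht' ht
    have h1 : FreeGroup.norm (φ (v⁻¹ * u)) ≤ B.sup FreeGroup.norm :=
      Finset.le_sup hBmem
    have h2 : FreeGroup.norm (v⁻¹ * u) ≠ 0 := by
      rw [ne_eq, FreeGroup.norm_eq_zero]
      intro h
      exact huv (by rwa [inv_mul_eq_one, eq_comm] at h)
    have h3 := hnorm (v⁻¹ * u)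
    have h4 : n ≤ n * FreeGroup.norm (v⁻¹ * u) :=
      Nat.le_mul_of_pos_right _ (Nat.pos_of_ne_zero h2)
    omega
end
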